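/- (Cotangent formula for the gradient of the one-ring area.) Let N ≥ 3, let v ∈ ℝ³ and let w : ZMod N → ℝ³ be a cyclic family of vertices such that for each i the three points v, w(i), w(i+1) are noncollinear. Define the one-ring area function A(x) = Σ_{i} (1/2)·‖(w(i) − x) × (w(i+1) − x)‖. For each i let α_i be the interior angle of the triangle [v, w(i), w(i+1)] at the vertex w(i+1) and let β_i be the interior angle of the triangle [v, w(i−1), w(i)] at the vertex w(i−1) (these are the two angles opposite the edge [w(i), v]). Then A is differentiable at v and its gradient at v equals (1/2)·Σ_{i} (cot α_i + cot β_i)·(v − w(i)). -/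

import Mathlib

open Real InnerProductGeometry

/-- The cross product on `ℝ³ = EuclideanSpace ℝ (Fin 3)`. -/
noncomputable def cross3 (u v : EuclideanSpace ℝ (Fin 3)) : EuclideanSpace ℝ (Fin 3) :=
  (EuclideanSpace.equiv (Fin 3) ℝ).symm
    (crossProduct ((EuclideanSpace.equiv (Fin 3) ℝ) u) ((EuclideanSpace.equiv (Fin 3) ℝ) v))

local notation "E" => EuclideanSpace ℝ (Fin 3)

lemma cross3_apply (u v : E) (i : Fin 3) :
    cross3 u v i = ![u 1 * v 2 - u 2 * v 1, u 2 * v 0 - u 0 * v 2, u 0 * v 1 - u 1 * v 0] i := by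
  simp [cross3, crossProduct]

lemma inner3 (x y : E) : (inner ℝ x y : ℝ) = x 0 * y 0 + x 1 * y 1 + x 2 * y 2 := by
  simp [PiLp.inner_apply, Fin.sum_univ_three]
  ring

lemma cross3_ne_zero_of_not_collinear {v a b : E}
    (h : ¬ Collinear ℝ ({v, a, b} : Set E)) : cross3 (a - v) (b - v) ≠ 0 := by
  intro hc
  apply h
  have hc2 : crossProduct ((EuclideanSpace.equiv (Fin 3) ℝ) (a - v))
      ((EuclideanSpace.equiv (Fin 3) ℝ) (b - v)) = 0 := by
    have := congrArg (EuclideanSpace.equiv (Fin 3) ℝ) hc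
    rw [cross3, (EuclideanSpace.equiv (Fin 3) ℝ).apply_symm_apply, map_zero] at this
    exact this
  have hdep : ¬ LinearIndependent ℝ ![(EuclideanSpace.equiv (Fin 3) ℝ) (a - v),
      (EuclideanSpace.equiv (Fin 3) ℝ) (b - v)] := by
    intro hli
    exact (crossProduct_ne_zero_iff_linearIndependent.mpr hli) hc2
  rw [linearIndependent_fin2] at hdep
  push_neg at hdep
  by_cases hbv : (EuclideanSpace.equiv (Fin 3) ℝ) (b - v) = 0
  · have hb : b = v := by
      have : b - v = (0 : E) := (EuclideanSpace.equiv (Fin 3) ℝ).injective (by rw [hbv, map_zero])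
      rwa [sub_eq_zero] at this
    subst hb
    refine (collinear_pair ℝ b a).subset ?_
    intro x hx
    simp only [Set.mem_insert_iff, Set.mem_singleton_iff] at hx ⊢
    tauto
  · obtain ⟨c, hcv⟩ := by
      have := hdep hbv
      simpa using this
    rw [collinear_iff_of_mem (Set.mem_insert v {a, b})]
    refine ⟨b - v, ?_⟩
    intro p hp
    rcases hp with h|h|h
    · exact ⟨0, by simp [h]⟩
    · refine ⟨c, ?_⟩
      have hav : a - v = c • (b - v) := by
        apply (EuclideanSpace.equiv (Fin 3) ℝ).injective
        simpa using hcv.symm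
      simp [h, ← hav]
    · rw [Set.mem_singleton_iff] at h
      exact ⟨1, by simp [h]⟩

lemma lagrange (x y : E) :
    (inner ℝ (cross3 x y) (cross3 x y) : ℝ) =
      (inner ℝ x x : ℝ) * (inner ℝ y y : ℝ) - (inner ℝ x y : ℝ) * (inner ℝ x y : ℝ) := by
  simp only [inner3, cross3_apply]
  simp
  ring

lemma sin_angle_norms (x y : E) :
    Real.sin (angle x y) * (‖x‖ * ‖y‖) = ‖cross3 x y‖ := by
  rw [sin_angle_mul_norm_mul_norm, ← lagrange x y, real_inner_self_eq_norm_mul_norm,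
    Real.sqrt_mul_self (norm_nonneg _)]

lemma cross3_zero_left (y : E) : cross3 0 y = 0 := by
  ext i
  fin_cases i <;> simp [cross3_apply]

lemma cross3_zero_right (x : E) : cross3 x 0 = 0 := by
  ext i
  fin_cases i <;> simp [cross3_apply]

lemma cot_angle_eq {x y : E} (h : cross3 x y ≠ 0) :
    Real.cot (angle x y) = (inner ℝ x y : ℝ) / ‖cross3 x y‖ := by
  have hx : x ≠ 0 := by rintro rfl; exact h (cross3_zero_left y)
  have hy : y ≠ 0 := by rintro rfl; exact h (cross3_zero_right x)
  have hxn : ‖x‖ ≠ 0 := norm_ne_zero_iff.mpr hx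
  have hyn : ‖y‖ ≠ 0 := norm_ne_zero_iff.mpr hy
  have hcn : ‖cross3 x y‖ ≠ 0 := norm_ne_zero_iff.mpr h
  have hs := sin_angle_norms x y
  have hsin : Real.sin (angle x y) = ‖cross3 x y‖ / (‖x‖ * ‖y‖) := by
    rw [eq_div_iff (mul_ne_zero hxn hyn)]; exact hs
  rw [Real.cot_eq_cos_div_sin, cos_angle, hsin]
  field_simp

noncomputable def crossR (c : E) : E →L[ℝ] E :=
  LinearMap.toContinuousLinearMap
  { toFun := fun x => cross3 x c
    map_add' := by
      intro x y; ext i; fin_cases i <;> simp [cross3_apply] <;> ring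
    map_smul' := by
      intro r x; ext i; fin_cases i <;> simp [cross3_apply] <;> ring }

lemma crossR_apply (c u : E) : crossR c u = cross3 u c := rfl

lemma cross3_affine (a b x : E) :
    cross3 (a - x) (b - x) = cross3 a b + cross3 x (a - b) := by
  ext i; fin_cases i <;> simp [cross3_apply] <;> ring

lemma key_identity (v a b u : E) :
    (inner ℝ (v-b) (a-b) : ℝ) * (inner ℝ (v-a) u : ℝ) + (inner ℝ (v-a) (b-a) : ℝ) * (inner ℝ (v-b) u : ℝ)
      = (inner ℝ (cross3 (a-v) (b-v)) (cross3 u (a-b)) : ℝ) := by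
  simp only [inner3, cross3_apply]
  simp
  ring

lemma crossA (v a b : E) : cross3 (v-b) (a-b) = cross3 (a-v) (b-v) := by
  ext i; fin_cases i <;> simp [cross3_apply] <;> ring

lemma crossB (v a b : E) : cross3 (v-a) (b-a) = -cross3 (a-v) (b-v) := by
  ext i; fin_cases i <;> simp [cross3_apply] <;> ring

lemma triangle_grad (v a b : E) (h : ¬ Collinear ℝ ({v, a, b} : Set E)) :
    HasGradientAt (fun x : E => (1/2 : ℝ) * ‖cross3 (a - x) (b - x)‖)
      ((1/2 : ℝ) • (Real.cot (angle (v - b) (a - b)) • (v - a)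
        + Real.cot (angle (v - a) (b - a)) • (v - b))) v := by
  set n : E := cross3 (a - v) (b - v) with hn
  have hnz : n ≠ 0 := cross3_ne_zero_of_not_collinear h
  have hnn : ‖n‖ ≠ 0 := norm_ne_zero_iff.mpr hnz
  have hfd : HasFDerivAt (fun x : E => cross3 (a - x) (b - x)) (crossR (a - b)) v := by
    have h1 : HasFDerivAt (fun x : E => cross3 a b + crossR (a-b) x) (crossR (a-b)) v :=
      ((crossR (a-b)).hasFDerivAt).const_add _
    have h2 : (fun x : E => cross3 (a - x) (b - x)) = fun x : E => cross3 a b + crossR (a-b) x :=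
      funext fun x => by rw [cross3_affine]; rfl
    rw [h2]; exact h1
  have hQ := hfd.inner ℝ hfd
  have hQv : (inner ℝ n n : ℝ) ≠ 0 := by
    rw [real_inner_self_eq_norm_mul_norm]; exact mul_ne_zero hnn hnn
  have hsq := (Real.hasDerivAt_sqrt hQv).comp_hasFDerivAt v hQ
  have hf := hsq.const_mul (1/2 : ℝ)
  have hfun : (fun x : E => (1/2:ℝ) * ‖cross3 (a-x) (b-x)‖)
      = (fun x : E => (1/2:ℝ) * Real.sqrt (inner ℝ (cross3 (a-x) (b-x)) (cross3 (a-x) (b-x)))) :=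
    funext fun x => by rw [real_inner_self_eq_norm_mul_norm, Real.sqrt_mul_self (norm_nonneg _)]
  rw [hasGradientAt_iff_hasFDerivAt, hfun]
  convert hf using 1
  · rfl
  · rfl
  have hsqrt : Real.sqrt (inner ℝ n n : ℝ) = ‖n‖ := by
    rw [real_inner_self_eq_norm_mul_norm, Real.sqrt_mul_self (norm_nonneg _)]
  have hca : cross3 (v-b) (a-b) = n := crossA v a b
  have hcb : cross3 (v-a) (b-a) = -n := crossB v a b
  have hcot1 : Real.cot (angle (v-b) (a-b)) = (inner ℝ (v-b) (a-b) : ℝ) / ‖n‖ := by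
    rw [cot_angle_eq (by rw [hca]; exact hnz), hca]
  have hcot2 : Real.cot (angle (v-a) (b-a)) = (inner ℝ (v-a) (b-a) : ℝ) / ‖n‖ := by
    rw [cot_angle_eq (by rw [hcb]; simpa using hnz), hcb, norm_neg]
  ext u
  simp only [InnerProductSpace.toDual_apply_apply, ContinuousLinearMap.smul_apply,
    ContinuousLinearMap.comp_apply, ContinuousLinearMap.prod_apply, fderivInnerCLM_apply,
    crossR_apply, smul_eq_mul]
  rw [real_inner_smul_left, inner_add_left, real_inner_smul_left, real_inner_smul_left, hcot1, hcot2, hsqrt]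
  have hkey := key_identity v a b u
  rw [real_inner_comm (cross3 u (a-b)) n] at *
  set A := (inner ℝ (v-b) (a-b) : ℝ)
  set B := (inner ℝ (v-a) (b-a) : ℝ)
  set X := (inner ℝ (v-a) u : ℝ)
  set Y := (inner ℝ (v-b) u : ℝ)
  set C := (inner ℝ (cross3 u (a-b)) n : ℝ)
  set r := ‖n‖
  field_simp
  linarith [hkey]

/-- Cotangent formula for the gradient of the one-ring area: for a vertex `v` and a cyclic
family `w : ZMod N → ℝ³` of neighbours (each triangle `[v, w i, w (i+1)]` noncollinear), the
one-ring area `x ↦ ∑ i, (1/2)‖(w i - x) × (w (i+1) - x)‖` is differentiable at `v` with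
gradient `(1/2) ∑ i, (cot αᵢ + cot βᵢ) (v - w i)`, where `αᵢ` is the interior angle of
`[v, w i, w (i+1)]` at `w (i+1)` and `βᵢ` that of `[v, w (i-1), w i]` at `w (i-1)`. -/
theorem gradient_one_ring_area_cotangent (N : ℕ) [NeZero N] (hN : 3 ≤ N)
    (v : EuclideanSpace ℝ (Fin 3)) (w : ZMod N → EuclideanSpace ℝ (Fin 3))
    (hw : ∀ i : ZMod N,
      ¬ Collinear ℝ ({v, w i, w (i + 1)} : Set (EuclideanSpace ℝ (Fin 3)))) :
    HasGradientAt
      (fun x => ∑ i : ZMod N, (1/2 : ℝ) * ‖cross3 (w i - x) (w (i + 1) - x)‖)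
      ((1/2 : ℝ) • ∑ i : ZMod N,
        (Real.cot (angle (v - w (i + 1)) (w i - w (i + 1)))
          + Real.cot (angle (v - w (i - 1)) (w i - w (i - 1)))) • (v - w i)) v := by
  have hT : ∀ i : ZMod N, HasGradientAt
      (fun x : E => (1/2:ℝ) * ‖cross3 (w i - x) (w (i+1) - x)‖)
      ((1/2:ℝ) • (Real.cot (angle (v - w (i+1)) (w i - w (i+1))) • (v - w i)
        + Real.cot (angle (v - w i) (w (i+1) - w i)) • (v - w (i+1)))) v :=
    fun i => triangle_grad v (w i) (w (i+1)) (hw i)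
  have hre : ∑ i : ZMod N, Real.cot (angle (v - w i) (w (i+1) - w i)) • (v - w (i+1))
      = ∑ i : ZMod N, Real.cot (angle (v - w (i-1)) (w i - w (i-1))) • (v - w i) := by
    apply Fintype.sum_equiv (Equiv.addRight (1 : ZMod N))
    intro i
    simp [add_sub_cancel_right]
  have hG : ((1/2 : ℝ) • ∑ i : ZMod N,
        (Real.cot (angle (v - w (i + 1)) (w i - w (i + 1)))
          + Real.cot (angle (v - w (i - 1)) (w i - w (i - 1)))) • (v - w i))
      = ∑ i : ZMod N, ((1/2:ℝ) • (Real.cot (angle (v - w (i+1)) (w i - w (i+1))) • (v - w i)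
        + Real.cot (angle (v - w i) (w (i+1) - w i)) • (v - w (i+1)))) := by
    simp only [add_smul, smul_add, Finset.sum_add_distrib, ← Finset.smul_sum]
    rw [hre]
  rw [hasGradientAt_iff_hasFDerivAt, hG, map_sum]
  exact HasFDerivAt.fun_sum fun i _ => (hT i).hasFDerivAt
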